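/- Let a > 0 be a real number and let C = t² + 1 + εa(𝐢 + 𝐣t) ∈ 𝔻ℍ[t] (the circular translation with radius a). For all real numbers f, g, setting h₁ = 𝐤 − ε(f𝐢 + (a + g)𝐣) and h₂ = −𝐤 + ε(f𝐢 + g𝐣), the linear polynomials t − h₁ and t − h₂ are motion polynomials and C = (t − h₁)(t − h₂). In particular, C admits infinitely many distinct factorizations into products of two monic linear motion polynomials. -/

import Mathlib

noncomputable section
open Polynomial

/-- The real quaternions ℍ. -/
abbrev Quat := Quaternion ℝ

/-- The dual quaternions 𝔻ℍ = ℍ ⊕ εℍ, realized as dual numbers over ℍ.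
An element is a pair `(p, q)` representing `p + εq`. -/
abbrev DQ := DualNumber Quat

/-- Conjugation of a dual quaternion `p + εq ↦ p̄ + εq̄`,
conjugating each quaternion part. -/
def dconj (h : DQ) : DQ := (star h.fst, star h.snd)

/-- The canonical ring homomorphism ℝ → 𝔻ℍ. -/
def realToDQ : ℝ →+* DQ := (TrivSqZeroExt.inlHom Quat Quat).comp (algebraMap ℝ Quat)

/-- Coefficientwise conjugate of a polynomial over 𝔻ℍ. -/
def pconj (C : DQ[X]) : DQ[X] := C.sum fun n a => Polynomial.C (dconj a) * X ^ n

/-- `C ∈ 𝔻ℍ[t]` is a motion polynomial if `C C̄ ∈ ℝ[t] \ {0}` and the leading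
coefficient of `C` is invertible. -/
def IsMotionPoly (C : DQ[X]) : Prop :=
  (∃ R : ℝ[X], R ≠ 0 ∧ C * pconj C = R.map realToDQ) ∧ IsUnit C.leadingCoeff

/-- The action of a dual quaternion `p + εq` (with `p ≠ 0` and satisfying the Study
condition) on a pure quaternion `x`:  `x ↦ (p x p̄ + p q̄ − q p̄)/N(p)`. -/
def act (p q x : Quat) : Quat :=
  (p * x * star p + p * star q - q * star p) * (p * star p)⁻¹

/-- The dual quaternion `p + εq` from its primal part `p` and dual part `q`. -/
def dq (p q : Quat) : DQ := (p, q)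

/-- The imaginary unit 𝐢 of ℍ. -/
def qi : Quat := ⟨0, 1, 0, 0⟩
/-- The imaginary unit 𝐣 of ℍ. -/
def qj : Quat := ⟨0, 0, 1, 0⟩
/-- The imaginary unit 𝐤 of ℍ. -/
def qk : Quat := ⟨0, 0, 0, 1⟩

set_option linter.unreachableTactic false
set_option linter.unusedTactic false
open Quaternion

@[simp] lemma qi_re : qi.re = 0 := rfl
@[simp] lemma qi_imI : qi.imI = 1 := rfl
@[simp] lemma qi_imJ : qi.imJ = 0 := rfl
@[simp] lemma qi_imK : qi.imK = 0 := rfl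
@[simp] lemma qj_re : qj.re = 0 := rfl
@[simp] lemma qj_imI : qj.imI = 0 := rfl
@[simp] lemma qj_imJ : qj.imJ = 1 := rfl
@[simp] lemma qj_imK : qj.imK = 0 := rfl
@[simp] lemma qk_re : qk.re = 0 := rfl
@[simp] lemma qk_imI : qk.imI = 0 := rfl
@[simp] lemma qk_imJ : qk.imJ = 0 := rfl
@[simp] lemma qk_imK : qk.imK = 1 := rfl
lemma dq_fst (p q : Quat) : (dq p q).fst = p := rfl
lemma dq_snd (p q : Quat) : (dq p q).snd = q := rfl
lemma dconj_fst (h : DQ) : (dconj h).fst = star h.fst := rfl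
lemma dconj_snd (h : DQ) : (dconj h).snd = star h.snd := rfl

lemma dconj_zero : dconj 0 = 0 := by simp [dconj]; rfl
lemma dconj_neg (h : DQ) : dconj (-h) = -dconj h := by
  simp [dconj, Prod.ext_iff]; rfl
lemma dconj_add (a b : DQ) : dconj (a + b) = dconj a + dconj b := by
  simp [dconj]; rfl
lemma dconj_one : dconj 1 = 1 := by
  simp [dconj]; rfl

lemma pconj_X_sub_C (h : DQ) : pconj (X - Polynomial.C h) = X - Polynomial.C (dconj h) := by
  unfold pconj
  rw [sub_eq_add_neg, ← Polynomial.C_neg, Polynomial.sum_add_index, Polynomial.sum_X_index,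
    Polynomial.sum_C_index]
  · rw [dconj_one, dconj_neg]
    rw [Polynomial.C_1, one_mul, pow_one, pow_zero, mul_one, Polynomial.C_neg, ← sub_eq_add_neg]
  · rw [dconj_zero, Polynomial.C_0, zero_mul]
  · rw [dconj_zero, Polynomial.C_0, zero_mul]
  · intro n; rw [dconj_zero, Polynomial.C_0, zero_mul]
  · intro n a b; rw [dconj_add, Polynomial.C_add, add_mul]

lemma expand2 (h1 h2 : DQ) : (X - Polynomial.C h1) * (X - Polynomial.C h2)
    = X ^ 2 - Polynomial.C (h1 + h2) * X + Polynomial.C (h1 * h2) := by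
  have hc : X * Polynomial.C h2 = Polynomial.C h2 * X := by rw [Polynomial.X_mul]
  rw [sub_mul, mul_sub, mul_sub, hc, Polynomial.C_add, Polynomial.C_mul, add_mul, sq]
  abel

lemma key (p q : Quat) (hp : star p = -p) (hq : star q = -q) (hpp : p * p = -1)
    (hpq : p * q + q * p = 0) :
    dq p q + dconj (dq p q) = 0 ∧ dq p q * dconj (dq p q) = 1 := by
  constructor
  · refine TrivSqZeroExt.ext ?_ ?_ <;> simp [dq_fst, dq_snd, dconj_fst, dconj_snd, hp, hq]
  · refine TrivSqZeroExt.ext ?_ ?_ <;>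
      simp [dq_fst, dq_snd, dconj_fst, dconj_snd, hp, hq, hpp, op_smul_eq_mul, smul_eq_mul]
    · linear_combination (norm := noncomm_ring) -hpq

lemma star_qk : star qk = -qk := by ext <;> simp
lemma qk_mul_qk : qk * qk = -1 := by ext <;> simp
lemma anticomm (x y : ℝ) : qk * (x • qi + y • qj) + (x • qi + y • qj) * qk = 0 := by
  ext <;> simp <;> ring
lemma star_pure (x y : ℝ) : star (x • qi + y • qj) = -(x • qi + y • qj) := by
  ext <;> simp
lemma prod_snd (a f g : ℝ) :
    qk * (f • qi + g • qj) + (f • qi + (a + g) • qj) * qk = a • qi := by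
  ext <;> simp <;> ring
lemma sum_snd (a f g : ℝ) :
    -(f • qi + (a + g) • qj) + (f • qi + g • qj) = -(a • qj) := by
  ext <;> simp <;> ring

lemma motion_of (h : DQ) (h1 : h + dconj h = 0) (h2 : h * dconj h = 1) :
    IsMotionPoly (X - Polynomial.C h) := by
  constructor
  · refine ⟨X ^ 2 + 1, ?_, ?_⟩
    · intro H
      simpa using congrArg (Polynomial.eval 0) H
    · rw [pconj_X_sub_C, expand2, h1, h2]
      simp
  · exact (Polynomial.monic_X_sub_C h).leadingCoeff ▸ isUnit_one

lemma key1 (a f g : ℝ) :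
    dq qk (-(f • qi + (a + g) • qj)) + dconj (dq qk (-(f • qi + (a + g) • qj))) = 0 ∧
    dq qk (-(f • qi + (a + g) • qj)) * dconj (dq qk (-(f • qi + (a + g) • qj))) = 1 := by
  refine key _ _ star_qk ?_ qk_mul_qk ?_
  · rw [star_neg, star_pure]
  · have := anticomm f (a + g)
    have h2 : qk * -(f • qi + (a + g) • qj) + -(f • qi + (a + g) • qj) * qk
        = -(qk * (f • qi + (a + g) • qj) + (f • qi + (a + g) • qj) * qk) := by
      rw [mul_neg, neg_mul, neg_add]
    rw [h2, this, neg_zero]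

lemma key2 (f g : ℝ) :
    dq (-qk) (f • qi + g • qj) + dconj (dq (-qk) (f • qi + g • qj)) = 0 ∧
    dq (-qk) (f • qi + g • qj) * dconj (dq (-qk) (f • qi + g • qj)) = 1 := by
  refine key _ _ ?_ (star_pure f g) ?_ ?_
  · rw [star_neg, star_qk, neg_neg]
  · rw [neg_mul_neg, qk_mul_qk]
  · have := anticomm f g
    have h2 : -qk * (f • qi + g • qj) + (f • qi + g • qj) * -qk
        = -(qk * (f • qi + g • qj) + (f • qi + g • qj) * qk) := by
      rw [neg_mul, mul_neg, neg_add]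
    rw [h2, this, neg_zero]

lemma sum_eq (a f g : ℝ) :
    dq qk (-(f • qi + (a + g) • qj)) + dq (-qk) (f • qi + g • qj) = dq 0 (-(a • qj)) := by
  refine TrivSqZeroExt.ext ?_ ?_ <;> simp [dq_fst, dq_snd]
  · module

lemma prod_eq (a f g : ℝ) :
    dq qk (-(f • qi + (a + g) • qj)) * dq (-qk) (f • qi + g • qj) = 1 + dq 0 (a • qi) := by
  have h1 : (1 : DQ) + dq 0 (a • qi) = dq 1 (a • qi) := by
    refine TrivSqZeroExt.ext ?_ ?_ <;> simp [dq_fst, dq_snd]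
  rw [h1]
  refine TrivSqZeroExt.ext ?_ ?_ <;>
    simp [dq_fst, dq_snd, op_smul_eq_mul, smul_eq_mul, qk_mul_qk]
  · linear_combination (norm := noncomm_ring) prod_snd a f g

lemma factor_eq (a f g : ℝ) :
    X ^ 2 + 1 + Polynomial.C (dq 0 (a • qi)) + Polynomial.C (dq 0 (a • qj)) * X
      = (X - Polynomial.C (dq qk (-(f • qi + (a + g) • qj)))) *
        (X - Polynomial.C (dq (-qk) (f • qi + g • qj))) := by
  rw [expand2, sum_eq, prod_eq]
  have hj : dq 0 (-(a • qj)) = -dq 0 (a • qj) := by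
    refine TrivSqZeroExt.ext ?_ ?_ <;> simp [dq_fst, dq_snd]
  rw [hj, Polynomial.C_neg, Polynomial.C_add, Polynomial.C_1]
  noncomm_ring
  simp
  have := neg_mul (Polynomial.C (dq 0 (a • qj))) (X : DQ[X])
  rw [this, neg_neg]

/-- For a > 0 and `C = t² + 1 + εa(𝐢 + 𝐣t)` (circular translation of
radius a), for all real f, g the dual quaternions `h₁ = 𝐤 − ε(f𝐢 + (a+g)𝐣)` and
`h₂ = −𝐤 + ε(f𝐢 + g𝐣)` give monic linear motion polynomials with
`C = (t − h₁)(t − h₂)`; in particular C admits infinitely many distinct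
factorizations into products of two monic linear motion polynomials. -/
theorem stmt17 (a : ℝ) (ha : 0 < a) :
    (∀ f g : ℝ,
      IsMotionPoly (X - Polynomial.C (dq qk (-(f • qi + (a + g) • qj)))) ∧
      IsMotionPoly (X - Polynomial.C (dq (-qk) (f • qi + g • qj))) ∧
      X ^ 2 + 1 + Polynomial.C (dq 0 (a • qi)) + Polynomial.C (dq 0 (a • qj)) * X
        = (X - Polynomial.C (dq qk (-(f • qi + (a + g) • qj)))) *
          (X - Polynomial.C (dq (-qk) (f • qi + g • qj)))) ∧
    {hp : DQ × DQ |
        IsMotionPoly (X - Polynomial.C hp.1) ∧ IsMotionPoly (X - Polynomial.C hp.2) ∧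
        X ^ 2 + 1 + Polynomial.C (dq 0 (a • qi)) + Polynomial.C (dq 0 (a • qj)) * X
          = (X - Polynomial.C hp.1) * (X - Polynomial.C hp.2)}.Infinite := by
  have main : ∀ f g : ℝ,
      IsMotionPoly (X - Polynomial.C (dq qk (-(f • qi + (a + g) • qj)))) ∧
      IsMotionPoly (X - Polynomial.C (dq (-qk) (f • qi + g • qj))) ∧
      X ^ 2 + 1 + Polynomial.C (dq 0 (a • qi)) + Polynomial.C (dq 0 (a • qj)) * X
        = (X - Polynomial.C (dq qk (-(f • qi + (a + g) • qj)))) *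
          (X - Polynomial.C (dq (-qk) (f • qi + g • qj))) := by
    intro f g
    exact ⟨motion_of _ (key1 a f g).1 (key1 a f g).2,
      motion_of _ (key2 f g).1 (key2 f g).2, factor_eq a f g⟩
  refine ⟨main, ?_⟩
  refine Set.infinite_of_injective_forall_mem
    (f := fun f : ℝ => (dq qk (-(f • qi + (a + 0) • qj)), dq (-qk) (f • qi + (0:ℝ) • qj)))
    ?_ ?_
  · intro f f' hff
    have := congrArg (fun x => (x.2 : DQ).snd.imI) hff
    simpa [dq_snd] using this
  · intro f
    exact (main f 0)
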